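/- Assume K symmetric with zero diagonal and K_{ij} > 0 for all i ≠ j. Then for every U ∈ D, the reduced mobility matrix M̂(U) = Â(U)(D²ĥ(U))^{-1} is symmetric positive definite, and consequently every eigenvalue of the diffusion matrix Â(U) = M̂(U) D²ĥ(U) has positive real part. -/

import Mathlib

open Matrix Finset

/-- dot product expansion -/
private lemma dot_expand {m : ℕ} (M : Matrix (Fin m) (Fin m) ℝ) (z : Fin m → ℝ) :
    z ⬝ᵥ M *ᵥ z = ∑ i, ∑ j, z i * (M i j * z j) := by
  simp [dotProduct, mulVec, Finset.mul_sum]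

private lemma quad_re {m : ℕ} (S : Matrix (Fin m) (Fin m) ℝ) (v : Fin m → ℂ) :
    (star v ⬝ᵥ (S.map (fun x : ℝ => (x : ℂ))) *ᵥ v).re
      = (fun i => (v i).re) ⬝ᵥ S *ᵥ (fun i => (v i).re)
        + (fun i => (v i).im) ⬝ᵥ S *ᵥ (fun i => (v i).im) := by
  have h : star v ⬝ᵥ (S.map (fun x : ℝ => (x : ℂ))) *ᵥ v
      = ∑ i, ∑ j, (starRingEnd ℂ) (v i) * ((S i j : ℂ) * v j) := by
    simp [dotProduct, mulVec, Finset.mul_sum, Matrix.map_apply]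
  rw [h, Complex.re_sum]
  simp only [Complex.re_sum]
  rw [dotProduct, dotProduct, ← Finset.sum_add_distrib]
  refine Finset.sum_congr rfl fun i _ => ?_
  simp only [mulVec, dotProduct, Finset.mul_sum, ← Finset.sum_add_distrib]
  refine Finset.sum_congr rfl fun j _ => ?_
  simp [Complex.mul_re, Complex.mul_im]

private lemma quad_im {m : ℕ} (S : Matrix (Fin m) (Fin m) ℝ) (hS : Sᵀ = S) (v : Fin m → ℂ) :
    (star v ⬝ᵥ (S.map (fun x : ℝ => (x : ℂ))) *ᵥ v).im = 0 := by
  have h : star v ⬝ᵥ (S.map (fun x : ℝ => (x : ℂ))) *ᵥ v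
      = ∑ i, ∑ j, (starRingEnd ℂ) (v i) * ((S i j : ℂ) * v j) := by
    simp [dotProduct, mulVec, Finset.mul_sum, Matrix.map_apply]
  rw [h, Complex.im_sum]
  simp only [Complex.im_sum]
  have key : ∀ i j, ((starRingEnd ℂ) (v i) * ((S i j : ℂ) * v j)).im
      = S i j * ((v i).re * (v j).im - (v i).im * (v j).re) := by
    intro i j; simp [Complex.mul_im, Complex.mul_re]; ring
  simp only [key]
  have h2 : ∑ i, ∑ j, S i j * ((v i).re * (v j).im - (v i).im * (v j).re)
      = ∑ i, ∑ j, -(S i j * ((v i).re * (v j).im - (v i).im * (v j).re)) := by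
    rw [Finset.sum_comm]
    refine Finset.sum_congr rfl fun i _ => Finset.sum_congr rfl fun j _ => ?_
    have hji : S j i = S i j := (congrFun (congrFun hS i) j :)
    rw [hji]; ring
  simp only [Finset.sum_neg_distrib] at h2
  linarith

set_option maxHeartbeats 2000000 in
/-- for K symmetric, zero diagonal, K_{ij} > 0 off-diagonal,
the reduced mobility M̂(U) = Â(U)(D²ĥ(U))⁻¹ is symmetric positive definite on D,
and every eigenvalue of Â(U) has positive real part. -/
theorem stmt_15 (n : ℕ) (hn : 1 ≤ n) (K : Matrix (Fin (n+1)) (Fin (n+1)) ℝ)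
    (hdiag : ∀ i, K i i = 0) (hsym : ∀ i j, K i j = K j i)
    (hposK : ∀ i j, i ≠ j → 0 < K i j)
    (U : Fin n → ℝ) (hpos : ∀ i, 0 < U i) (hsum : ∑ i, U i < 1) :
    let Ahat : Matrix (Fin n) (Fin n) ℝ :=
      Matrix.of fun i j =>
        (if i = j then (∑ l, K i.succ l.succ * U l) + K i.succ 0 * (1 - ∑ l, U l) else 0)
          - (K i.succ j.succ - K i.succ 0) * U i
    let Hhat : Matrix (Fin n) (Fin n) ℝ :=
      Matrix.of fun i j => (if i = j then 1 / U i else 0) + 1 / (1 - ∑ k, U k)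
    let Mhat : Matrix (Fin n) (Fin n) ℝ := Ahat * Hhat⁻¹
    Mhat.IsSymm ∧ Mhat.PosDef ∧
      ∀ μ ∈ spectrum ℂ (Ahat.map (fun x : ℝ => (x : ℂ))), 0 < μ.re := by
  intro Ahat Hhat Mhat
  have hw : 0 < 1 - ∑ i, U i := by linarith
  set w : ℝ := 1 - ∑ i, U i with hw_def
  have hwne : w ≠ 0 := ne_of_gt hw
  have hUne : ∀ i, U i ≠ 0 := fun i => ne_of_gt (hpos i)
  have hA : Ahat = Matrix.of fun i j =>
      (if i = j then (∑ l, K i.succ l.succ * U l) + K i.succ 0 * w else 0)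
        - (K i.succ j.succ - K i.succ 0) * U i := rfl
  have hH : Hhat = Matrix.of fun i j => (if i = j then 1 / U i else 0) + 1 / w := rfl
  have hM : Mhat = Ahat * Hhat⁻¹ := rfl
  -- abbreviations
  set T : ℝ := ∑ k, K k.succ 0 * U k with hT_def
  set S : Fin n → ℝ := fun i => (∑ l, K i.succ l.succ * U l) + K i.succ 0 * w with hS_def
  set B : Matrix (Fin n) (Fin n) ℝ := Hhat * Ahat with hB_def
  -- column sums of Ahat
  have colsum : ∀ j, ∑ k, Ahat k j = K j.succ 0 * w + T := by
    intro j
    have h0 : ∀ k, Ahat k j = (if k = j then (∑ l, K k.succ l.succ * U l) + K k.succ 0 * w else 0)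
        - (K k.succ j.succ - K k.succ 0) * U k := fun k => rfl
    rw [Finset.sum_congr rfl fun k _ => h0 k, Finset.sum_sub_distrib]
    have h1 : ∑ k, (if k = j then (∑ l, K k.succ l.succ * U l) + K k.succ 0 * w else 0)
        = (∑ l, K j.succ l.succ * U l) + K j.succ 0 * w := by
      rw [Finset.sum_ite_eq' Finset.univ j
        (fun k => (∑ l, K k.succ l.succ * U l) + K k.succ 0 * w)]
      simp
    have h2 : ∑ k, (K k.succ j.succ - K k.succ 0) * U k
        = (∑ k, K j.succ k.succ * U k) - T := by
      rw [hT_def, ← Finset.sum_sub_distrib]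
      refine Finset.sum_congr rfl fun k _ => ?_
      rw [hsym k.succ j.succ]; ring
    rw [h1, h2]
    ring
  -- entries of B
  have hBentry : ∀ i j, B i j =
      (if i = j then S i / U i else 0) - K i.succ j.succ + K i.succ 0 + K j.succ 0 + T / w := by
    intro i j
    have hBij : B i j = ∑ k, ((if i = k then 1 / U i else 0) + 1 / w) * Ahat k j := by
      rw [hB_def, Matrix.mul_apply]
      exact Finset.sum_congr rfl fun k _ => by
        rw [show Hhat i k = (if i = k then 1 / U i else 0) + 1 / w from rfl]
    have hsplit : ∑ k, ((if i = k then 1 / U i else 0) + 1 / w) * Ahat k j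
        = (1 / U i) * Ahat i j + (1 / w) * ∑ k, Ahat k j := by
      have hp : ∀ k, ((if i = k then 1 / U i else 0) + 1 / w) * Ahat k j
          = (if i = k then (1 / U i) * Ahat k j else 0) + (1 / w) * Ahat k j := by
        intro k; by_cases h : i = k
        · rw [if_pos h, if_pos h]; ring
        · rw [if_neg h, if_neg h]; ring
      rw [Finset.sum_congr rfl fun k _ => hp k, Finset.sum_add_distrib,
        Finset.sum_ite_eq Finset.univ i (fun k => (1 / U i) * Ahat k j),
        ← Finset.mul_sum]
      simp
    rw [hBij, hsplit, colsum j]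
    have hAij : Ahat i j = (if i = j then (∑ l, K i.succ l.succ * U l) + K i.succ 0 * w else 0)
        - (K i.succ j.succ - K i.succ 0) * U i := rfl
    rw [hAij, hS_def]
    by_cases h : i = j
    · subst h
      rw [if_pos rfl, if_pos rfl]
      field_simp [hUne i, hwne]
      ring
    · rw [if_neg h, if_neg h]
      field_simp [hUne i, hwne]
      ring
  -- B is symmetric
  have hBsymm : Bᵀ = B := by
    ext i j
    rw [Matrix.transpose_apply, hBentry, hBentry]
    have : K j.succ i.succ = K i.succ j.succ := hsym _ _
    rw [this]
    by_cases h : i = j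
    · subst h; ring
    · rw [if_neg h, if_neg (fun hh => h hh.symm)]; ring
  -- quadratic form positivity of B
  have hBquad : ∀ z : Fin n → ℝ, z ≠ 0 → 0 < z ⬝ᵥ B *ᵥ z := by
    intro z hz
    -- row expansion
    have inner : ∀ i, ∑ j, z i * (B i j * z j)
        = z i * (S i / U i * z i)
          - (∑ j, K i.succ j.succ * (z i * z j))
          + K i.succ 0 * (z i * ∑ j, z j)
          + z i * (∑ j, K j.succ 0 * z j)
          + T / w * (z i * ∑ j, z j) := by
      intro i
      have hptw : ∀ j, z i * (B i j * z j)
          = (if i = j then z i * (S i / U i * z j) else 0)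
            - K i.succ j.succ * (z i * z j) + K i.succ 0 * (z i * z j)
            + z i * (K j.succ 0 * z j) + T / w * (z i * z j) := by
        intro j; rw [hBentry i j]
        by_cases h : i = j
        · rw [if_pos h, if_pos h]; ring
        · rw [if_neg h, if_neg h]; ring
      rw [Finset.sum_congr rfl fun j _ => hptw j, Finset.sum_add_distrib,
        Finset.sum_add_distrib, Finset.sum_add_distrib, Finset.sum_sub_distrib,
        Finset.sum_ite_eq Finset.univ i (fun j => z i * (S i / U i * z j))]
      simp only [Finset.mem_univ, if_true, ← Finset.mul_sum]
    have e1 : z ⬝ᵥ B *ᵥ z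
        = (∑ i, z i * (S i / U i * z i))
          - (∑ i, ∑ j, K i.succ j.succ * (z i * z j))
          + 2 * ((∑ j, z j) * (∑ i, K i.succ 0 * z i))
          + T / w * ((∑ j, z j) * ∑ j, z j) := by
      rw [dot_expand, Finset.sum_congr rfl fun i _ => inner i, Finset.sum_add_distrib,
        Finset.sum_add_distrib, Finset.sum_add_distrib, Finset.sum_sub_distrib]
      have c1 : ∑ i, K i.succ 0 * (z i * ∑ j, z j) = (∑ j, z j) * (∑ i, K i.succ 0 * z i) := by
        rw [Finset.mul_sum]
        exact Finset.sum_congr rfl fun i _ => by ring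
      have c2 : ∑ i, z i * (∑ j, K j.succ 0 * z j) = (∑ j, z j) * (∑ i, K i.succ 0 * z i) := by
        rw [← Finset.sum_mul]
      have c3 : ∑ i, T / w * (z i * ∑ j, z j) = T / w * ((∑ j, z j) * ∑ j, z j) := by
        rw [← Finset.mul_sum, ← Finset.sum_mul]
      rw [c1, c2, c3]
      ring
    have e2 : ∑ i, ∑ j, K i.succ j.succ * (U j * (z i) ^ 2 / U i - z i * z j)
        = (∑ i, z i * (S i / U i * z i)) - w * (∑ i, K i.succ 0 * ((z i) ^ 2 / U i))
          - ∑ i, ∑ j, K i.succ j.succ * (z i * z j) := by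
      have per : ∀ i, ∑ j, K i.succ j.succ * (U j * (z i) ^ 2 / U i - z i * z j)
          = z i * (S i / U i * z i) - w * (K i.succ 0 * ((z i) ^ 2 / U i))
            - ∑ j, K i.succ j.succ * (z i * z j) := by
        intro i
        have hstep : ∑ j, K i.succ j.succ * (U j * (z i) ^ 2 / U i - z i * z j)
            = (z i) ^ 2 / U i * (∑ j, K i.succ j.succ * U j)
              - ∑ j, K i.succ j.succ * (z i * z j) := by
          rw [Finset.mul_sum, ← Finset.sum_sub_distrib]
          exact Finset.sum_congr rfl fun j _ => by ring
        rw [hstep]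
        simp only [hS_def]
        ring
      rw [Finset.sum_congr rfl fun i _ => per i, Finset.sum_sub_distrib,
        Finset.sum_sub_distrib, ← Finset.mul_sum]
    have e4 : ∑ i, K i.succ 0 * (U i / w) * (w * z i / U i + ∑ j, z j) ^ 2
        = w * (∑ i, K i.succ 0 * ((z i) ^ 2 / U i))
          + 2 * ((∑ j, z j) * (∑ i, K i.succ 0 * z i))
          + T / w * ((∑ j, z j) * ∑ j, z j) := by
      have per : ∀ i, K i.succ 0 * (U i / w) * (w * z i / U i + ∑ j, z j) ^ 2
          = w * (K i.succ 0 * ((z i) ^ 2 / U i))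
            + 2 * ((∑ j, z j) * (K i.succ 0 * z i))
            + (K i.succ 0 * U i) * (((∑ j, z j) * ∑ j, z j) / w) := by
        intro i
        field_simp [hUne i, hwne]
        ring
      rw [Finset.sum_congr rfl fun i _ => per i, Finset.sum_add_distrib,
        Finset.sum_add_distrib, ← Finset.mul_sum, ← Finset.mul_sum, ← Finset.mul_sum,
        ← Finset.sum_mul, hT_def]
      ring
    -- positivity of P1
    have hP1 : 0 ≤ ∑ i, ∑ j, K i.succ j.succ * (U j * (z i) ^ 2 / U i - z i * z j) := by
      have hdouble : 2 * (∑ i, ∑ j, K i.succ j.succ * (U j * (z i) ^ 2 / U i - z i * z j))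
          = ∑ i, ∑ j, K i.succ j.succ * (U i * U j) * (z i / U i - z j / U j) ^ 2 := by
        have swap : ∑ i, ∑ j, K i.succ j.succ * (U j * (z i) ^ 2 / U i - z i * z j)
            = ∑ i, ∑ j, K j.succ i.succ * (U i * (z j) ^ 2 / U j - z j * z i) :=
          Finset.sum_comm
        rw [two_mul]
        nth_rewrite 2 [swap]
        rw [← Finset.sum_add_distrib]
        refine Finset.sum_congr rfl fun i _ => ?_
        rw [← Finset.sum_add_distrib]
        refine Finset.sum_congr rfl fun j _ => ?_
        rw [hsym j.succ i.succ]
        field_simp [hUne i, hUne j]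
        ring
      have hnn : 0 ≤ ∑ i, ∑ j, K i.succ j.succ * (U i * U j) * (z i / U i - z j / U j) ^ 2 := by
        refine Finset.sum_nonneg fun i _ => Finset.sum_nonneg fun j _ => ?_
        have hK : 0 ≤ K i.succ j.succ := by
          by_cases h : i = j
          · subst h; rw [hdiag]
          · exact le_of_lt (hposK _ _ fun hh => h (Fin.succ_injective n hh))
        have hU : 0 ≤ U i * U j := le_of_lt (mul_pos (hpos i) (hpos j))
        positivity
      linarith [hdouble, hnn]
    -- positivity of P2
    have hterm : ∀ i, 0 ≤ K i.succ 0 * (U i / w) * (w * z i / U i + ∑ j, z j) ^ 2 := by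
      intro i
      have hK : 0 < K i.succ 0 := hposK _ _ (Fin.succ_ne_zero i)
      have hU : 0 < U i / w := div_pos (hpos i) hw
      positivity
    have hP2 : 0 < ∑ i, K i.succ 0 * (U i / w) * (w * z i / U i + ∑ j, z j) ^ 2 := by
      rcases (Finset.sum_nonneg fun i _ => hterm i).lt_or_eq with h | h
      · exact h
      · exfalso
        have hall := (Finset.sum_eq_zero_iff_of_nonneg fun i _ => hterm i).mp h.symm
        have hzero : ∀ i, w * z i / U i + ∑ j, z j = 0 := by
          intro i
          have hi := hall i (Finset.mem_univ i)
          have hK : 0 < K i.succ 0 := hposK _ _ (Fin.succ_ne_zero i)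
          have hU : 0 < U i / w := div_pos (hpos i) hw
          have hsq : (w * z i / U i + ∑ j, z j) ^ 2 = 0 := by
            by_contra hne
            have : 0 < (w * z i / U i + ∑ j, z j) ^ 2 :=
              (sq_nonneg _).lt_of_ne (Ne.symm hne)
            nlinarith [hi, mul_pos hK hU, this]
          exact (pow_eq_zero_iff two_ne_zero).mp hsq
        have hzi : ∀ i, w * z i = -(∑ j, z j) * U i := by
          intro i
          have := hzero i
          field_simp [hUne i] at this
          linarith [this]
        have hw1 : w + ∑ i, U i = 1 := by rw [hw_def]; ring
        have hw2 : w * (∑ j, z j) = -(∑ j, z j) * (∑ i, U i) := by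
          rw [Finset.mul_sum, Finset.mul_sum]
          exact Finset.sum_congr rfl fun i _ => hzi i
        have hσ : (∑ j, z j) = 0 := by
          linear_combination hw2 - (∑ j, z j) * hw1
        have hz0 : z = 0 := by
          funext i
          have h1 := hzi i
          rw [hσ] at h1
          have : w * z i = 0 := by linarith [h1]
          exact (mul_eq_zero.mp this).resolve_left hwne
        exact hz hz0
    -- combine
    have hE : z ⬝ᵥ B *ᵥ z
        = (∑ i, ∑ j, K i.succ j.succ * (U j * (z i) ^ 2 / U i - z i * z j))
          + ∑ i, K i.succ 0 * (U i / w) * (w * z i / U i + ∑ j, z j) ^ 2 := by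
      rw [e1, e2, e4]
      ring
    rw [hE]
    linarith [hP1, hP2]
  have herm_of_symm : ∀ (M : Matrix (Fin n) (Fin n) ℝ), Mᵀ = M → M.IsHermitian := by
    intro M h
    ext i j
    rw [Matrix.conjTranspose_apply, star_trivial]
    exact congrFun (congrFun h i) j
  have hBpd : B.PosDef := by
    refine Matrix.PosDef.of_dotProduct_mulVec_pos (herm_of_symm _ hBsymm) ?_; intro z hz
    rw [star_trivial]
    exact hBquad z hz
  -- Hhat symmetric and positive definite
  have hHsymm : Hhatᵀ = Hhat := by
    ext i j
    rw [Matrix.transpose_apply, hH]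
    simp only [Matrix.of_apply]
    by_cases h : i = j
    · subst h; ring
    · rw [if_neg h, if_neg (fun hh => h hh.symm)]
  have hHquad : ∀ z : Fin n → ℝ, z ≠ 0 → 0 < z ⬝ᵥ Hhat *ᵥ z := by
    intro z hz
    have inner : ∀ i, ∑ j, z i * (Hhat i j * z j)
        = z i ^ 2 * (1 / U i) + 1 / w * (z i * ∑ j, z j) := by
      intro i
      have hp : ∀ j, z i * (Hhat i j * z j)
          = (if i = j then z i * ((1 / U i) * z j) else 0) + 1 / w * (z i * z j) := by
        intro j
        have : Hhat i j = (if i = j then 1 / U i else 0) + 1 / w := rfl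
        rw [this]
        by_cases h : i = j
        · rw [if_pos h, if_pos h]; ring
        · rw [if_neg h, if_neg h]; ring
      rw [Finset.sum_congr rfl fun j _ => hp j, Finset.sum_add_distrib,
        Finset.sum_ite_eq Finset.univ i (fun j => z i * ((1 / U i) * z j)),
        ← Finset.mul_sum, ← Finset.mul_sum]
      simp
      ring
    rw [dot_expand, Finset.sum_congr rfl fun i _ => inner i, Finset.sum_add_distrib,
      ← Finset.mul_sum, ← Finset.sum_mul]
    have h1 : 0 < ∑ i, z i ^ 2 * (1 / U i) := by
      obtain ⟨i0, hi0⟩ := Function.ne_iff.mp hz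
      have hsq : 0 < z i0 ^ 2 :=
        (sq_nonneg _).lt_of_ne (Ne.symm (pow_ne_zero 2 hi0))
      have hu : 0 < 1 / U i0 := by have := hpos i0; positivity
      refine lt_of_lt_of_le (mul_pos hsq hu)
        (Finset.single_le_sum (f := fun i => z i ^ 2 * (1 / U i))
          (fun i _ => ?_) (Finset.mem_univ i0))
      have := hpos i
      positivity
    have h2 : 0 ≤ 1 / w * ((∑ i, z i) * ∑ j, z j) :=
      mul_nonneg (le_of_lt (one_div_pos.mpr hw)) (mul_self_nonneg _)
    linarith [h1, h2]
  have hHpd : Hhat.PosDef := by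
    refine Matrix.PosDef.of_dotProduct_mulVec_pos (herm_of_symm _ hHsymm) ?_; intro z hz
    rw [star_trivial]
    exact hHquad z hz
  have hHunit : IsUnit Hhat.det := hHpd.isUnit.map (Matrix.detMonoidHom)
  have hHinv_symm : (Hhat⁻¹)ᵀ = Hhat⁻¹ := by
    rw [Matrix.transpose_nonsing_inv, hHsymm]
  have hMeq : Mhat = Hhat⁻¹ * B * Hhat⁻¹ := by
    rw [hB_def]
    calc Mhat = Ahat * Hhat⁻¹ := hM
      _ = (Hhat⁻¹ * Hhat) * Ahat * Hhat⁻¹ := by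
          rw [Matrix.nonsing_inv_mul _ hHunit, Matrix.one_mul]
      _ = Hhat⁻¹ * (Hhat * Ahat) * Hhat⁻¹ := by rw [Matrix.mul_assoc Hhat⁻¹ Hhat Ahat]
  -- Part 1 : symmetry of Mhat
  have part1 : Mhat.IsSymm := by
    rw [Matrix.IsSymm, hMeq, Matrix.transpose_mul, Matrix.transpose_mul, hHinv_symm, hBsymm]
    exact (Matrix.mul_assoc _ _ _).symm
  -- Part 2 : Mhat positive definite
  have part2 : Mhat.PosDef := by
    refine Matrix.PosDef.of_dotProduct_mulVec_pos (herm_of_symm _ part1) ?_; intro z hz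
    · rw [star_trivial, hMeq]
      have hy : Hhat⁻¹ *ᵥ z ≠ 0 := by
        intro h0
        apply hz
        have : Hhat *ᵥ (Hhat⁻¹ *ᵥ z) = z := by
          rw [Matrix.mulVec_mulVec, Matrix.mul_nonsing_inv _ hHunit, Matrix.one_mulVec]
        rw [h0, Matrix.mulVec_zero] at this
        exact this.symm
      have : z ⬝ᵥ (Hhat⁻¹ * B * Hhat⁻¹) *ᵥ z = (Hhat⁻¹ *ᵥ z) ⬝ᵥ B *ᵥ (Hhat⁻¹ *ᵥ z) := by
        rw [← Matrix.mulVec_mulVec, ← Matrix.mulVec_mulVec, Matrix.dotProduct_mulVec z,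
          ← Matrix.mulVec_transpose, hHinv_symm]
      rw [this]
      exact hBquad _ hy
  refine ⟨part1, part2, ?_⟩
  -- Part 3 : spectrum
  intro μ hμ
  rw [spectrum.mem_iff] at hμ
  have hdet : (algebraMap ℂ (Matrix (Fin n) (Fin n) ℂ) μ
      - Ahat.map (fun x : ℝ => (x : ℂ))).det = 0 := by
    by_contra hne
    exact hμ ((Matrix.isUnit_iff_isUnit_det _).2 (Ne.isUnit hne))
  obtain ⟨v, hv0, hv⟩ := (Matrix.exists_mulVec_eq_zero_iff).2 hdet
  have heig : (Ahat.map (fun x : ℝ => (x : ℂ))) *ᵥ v = μ • v := by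
    rw [Matrix.sub_mulVec] at hv
    have halg : (algebraMap ℂ (Matrix (Fin n) (Fin n) ℂ) μ) *ᵥ v = μ • v := by
      rw [Algebra.algebraMap_eq_smul_one, Matrix.smul_mulVec, Matrix.one_mulVec]
    rw [halg] at hv
    exact (sub_eq_zero.mp hv).symm
  have hmapmul : (Hhat.map (fun x : ℝ => (x : ℂ))) * (Ahat.map (fun x : ℝ => (x : ℂ)))
      = B.map (fun x : ℝ => (x : ℂ)) := by
    rw [hB_def]
    have hco : (fun x : ℝ => (x : ℂ)) = ⇑Complex.ofRealHom := rfl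
    rw [hco, Matrix.map_mul]
  have hq : star v ⬝ᵥ (B.map (fun x : ℝ => (x : ℂ))) *ᵥ v
      = μ * (star v ⬝ᵥ (Hhat.map (fun x : ℝ => (x : ℂ))) *ᵥ v) := by
    rw [← hmapmul, ← Matrix.mulVec_mulVec, heig, Matrix.mulVec_smul, dotProduct_smul,
      smul_eq_mul]
  set x : Fin n → ℝ := fun i => (v i).re with hx_def
  set y : Fin n → ℝ := fun i => (v i).im with hy_def
  have hBnn : ∀ u : Fin n → ℝ, 0 ≤ u ⬝ᵥ B *ᵥ u := by
    intro u
    have := hBpd.posSemidef.dotProduct_mulVec_nonneg u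
    rwa [star_trivial] at this
  have hHnn : ∀ u : Fin n → ℝ, 0 ≤ u ⬝ᵥ Hhat *ᵥ u := by
    intro u
    have := hHpd.posSemidef.dotProduct_mulVec_nonneg u
    rwa [star_trivial] at this
  have hxy : x ≠ 0 ∨ y ≠ 0 := by
    by_contra hc
    push_neg at hc
    apply hv0
    funext i
    have h1 : (v i).re = 0 := congrFun hc.1 i
    have h2 : (v i).im = 0 := congrFun hc.2 i
    exact Complex.ext h1 h2
  have hposq : ∀ (M : Matrix (Fin n) (Fin n) ℝ),
      (∀ u : Fin n → ℝ, u ≠ 0 → 0 < u ⬝ᵥ M *ᵥ u) → (∀ u : Fin n → ℝ, 0 ≤ u ⬝ᵥ M *ᵥ u) →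
      0 < (star v ⬝ᵥ (M.map (fun x : ℝ => (x : ℂ))) *ᵥ v).re := by
    intro M hMpos hMnn
    rw [quad_re M v]
    rcases hxy with h | h
    · exact add_pos_of_pos_of_nonneg (hMpos x h) (hMnn y)
    · exact add_pos_of_nonneg_of_pos (hMnn x) (hMpos y h)
  have hqpos : 0 < (star v ⬝ᵥ (B.map (fun x : ℝ => (x : ℂ))) *ᵥ v).re :=
    hposq B hBquad hBnn
  have hhpos : 0 < (star v ⬝ᵥ (Hhat.map (fun x : ℝ => (x : ℂ))) *ᵥ v).re :=
    hposq Hhat hHquad hHnn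
  have hhim : (star v ⬝ᵥ (Hhat.map (fun x : ℝ => (x : ℂ))) *ᵥ v).im = 0 :=
    quad_im Hhat hHsymm v
  have hre := congrArg Complex.re hq
  rw [Complex.mul_re, hhim] at hre
  nlinarith [hqpos, hhpos, hre]
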